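/- For x ≠ 0, u > 0 and n ≥ 1, the weighted increment constants satisfy Σ_{i=1}^{2n} (|x|^n·C_i)^2 ≤ (Σ_{j=0}^{n} |a_j x^j|)^2 · γ_{4n} / (u^2 + 2u), where γ_{4n} = (1+u)^{4n} − 1. -/

import Mathlib

open Finset

private lemma sum_abs_bound14 (n : ℕ) (x : ℝ) (a : ℕ → ℝ) (m : ℕ) (hm : m ≤ n) :
    |a n| * |x| ^ n + ∑ j ∈ Icc 1 m, |a (n - j)| * |x| ^ (n - j)
      ≤ ∑ j ∈ range (n + 1), |a j * x ^ j| := by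
  have hrfl : ∑ j ∈ range (n + 1), |a j * x ^ j|
      = ∑ j ∈ range (n + 1), |a (n - j)| * |x| ^ (n - j) := by
    rw [← Finset.sum_range_reflect (fun j => |a j * x ^ j|) (n + 1)]
    refine Finset.sum_congr rfl fun j hj => ?_
    simp [abs_mul, abs_pow, Nat.add_sub_cancel]
  rw [hrfl]
  have hins : range (m + 1) = insert 0 (Icc 1 m) := by
    ext i
    simp only [Finset.mem_range, Finset.mem_insert, Finset.mem_Icc]
    omega
  have h1 : |a n| * |x| ^ n + ∑ j ∈ Icc 1 m, |a (n - j)| * |x| ^ (n - j)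
      = ∑ j ∈ range (m + 1), |a (n - j)| * |x| ^ (n - j) := by
    rw [hins, Finset.sum_insert (by simp)]
    simp
  rw [h1]
  refine Finset.sum_le_sum_of_subset_of_nonneg (Finset.range_subset_range.2 (by omega)) ?_
  intro i _ _
  exact mul_nonneg (abs_nonneg _) (pow_nonneg (abs_nonneg _) _)

private lemma C_bound14 (n : ℕ) (x : ℝ) (hx : x ≠ 0) (a : ℕ → ℝ) (u : ℝ) (hu : 0 < u)
    (m E L : ℕ) (hm : m ≤ n) (e : ℕ → ℕ) (he : ∀ j ∈ Icc 1 m, e j ≤ E) (hL : L ≤ E) :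
    |x| ^ n * (|a n| * (1 + u) ^ L
        + ∑ j ∈ Icc 1 m, |a (n - j)| * |x| ^ (-(j : ℤ)) * (1 + u) ^ e j)
      ≤ (∑ j ∈ range (n + 1), |a j * x ^ j|) * (1 + u) ^ E := by
  have hx0 : (0:ℝ) < |x| := abs_pos.2 hx
  have hu1 : (1:ℝ) ≤ 1 + u := by linarith
  have hxz : ∀ j, j ≤ n → |x| ^ n * |x| ^ (-(j : ℤ)) = |x| ^ (n - j) := by
    intro j hj
    rw [← zpow_natCast |x| n, ← zpow_add₀ (ne_of_gt hx0), ← zpow_natCast |x| (n - j)]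
    congr 1
    omega
  rw [mul_add, Finset.mul_sum]
  have step : ∀ j ∈ Icc 1 m,
      |x| ^ n * (|a (n - j)| * |x| ^ (-(j : ℤ)) * (1 + u) ^ e j)
        ≤ |a (n - j)| * |x| ^ (n - j) * (1 + u) ^ E := by
    intro j hj
    have hjn : j ≤ n := le_trans (Finset.mem_Icc.1 hj).2 hm
    have heq : |x| ^ n * (|a (n - j)| * |x| ^ (-(j : ℤ)) * (1 + u) ^ e j)
        = |a (n - j)| * |x| ^ (n - j) * (1 + u) ^ e j := by
      rw [← hxz j hjn]; ring
    rw [heq]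
    exact mul_le_mul_of_nonneg_left (pow_le_pow_right₀ hu1 (he j hj))
      (mul_nonneg (abs_nonneg _) (pow_nonneg (abs_nonneg _) _))
  have step0 : |x| ^ n * (|a n| * (1 + u) ^ L) ≤ |a n| * |x| ^ n * (1 + u) ^ E := by
    have : |x| ^ n * (|a n| * (1 + u) ^ L) = |a n| * |x| ^ n * (1 + u) ^ L := by ring
    rw [this]
    exact mul_le_mul_of_nonneg_left (pow_le_pow_right₀ hu1 hL)
      (mul_nonneg (abs_nonneg _) (pow_nonneg (abs_nonneg _) _))
  calc |x| ^ n * (|a n| * (1 + u) ^ L)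
        + ∑ j ∈ Icc 1 m, |x| ^ n * (|a (n - j)| * |x| ^ (-(j : ℤ)) * (1 + u) ^ e j)
      ≤ |a n| * |x| ^ n * (1 + u) ^ E
        + ∑ j ∈ Icc 1 m, |a (n - j)| * |x| ^ (n - j) * (1 + u) ^ E :=
        add_le_add step0 (Finset.sum_le_sum step)
    _ = (|a n| * |x| ^ n + ∑ j ∈ Icc 1 m, |a (n - j)| * |x| ^ (n - j)) * (1 + u) ^ E := by
        rw [add_mul, Finset.sum_mul]
    _ ≤ (∑ j ∈ range (n + 1), |a j * x ^ j|) * (1 + u) ^ E :=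
        mul_le_mul_of_nonneg_right (sum_abs_bound14 n x a m hm)
          (pow_nonneg (by linarith) _)

private lemma C_nonneg14 (n : ℕ) (x : ℝ) (a : ℕ → ℝ) (u : ℝ) (hu : 0 < u)
    (m L : ℕ) (e : ℕ → ℕ) :
    0 ≤ |x| ^ n * (|a n| * (1 + u) ^ L
        + ∑ j ∈ Icc 1 m, |a (n - j)| * |x| ^ (-(j : ℤ)) * (1 + u) ^ e j) := by
  refine mul_nonneg (pow_nonneg (abs_nonneg _) _) (add_nonneg ?_ ?_)
  · exact mul_nonneg (abs_nonneg _) (pow_nonneg (by linarith) _)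
  · refine Finset.sum_nonneg fun j _ => ?_
    exact mul_nonneg (mul_nonneg (abs_nonneg _) (zpow_nonneg (abs_nonneg _) _))
      (pow_nonneg (by linarith) _)

/-- For `x ≠ 0`, `u > 0` and `n ≥ 1`, the weighted increment
constants satisfy
`Σ_{i=1}^{2n} (|x|^n·C_i)² ≤ (Σ_{j=0}^n |a_j x^j|)²·γ_{4n}/(u² + 2u)`,
where `γ_{4n} = (1+u)^{4n} − 1`. -/
theorem stmt_14 (n : ℕ) (hn : 1 ≤ n) (x : ℝ) (hx : x ≠ 0) (a : ℕ → ℝ)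
    (u : ℝ) (hu : 0 < u)
    (C : ℕ → ℝ)
    (hCodd : ∀ k, 1 ≤ k → k ≤ n →
      C (2 * k - 1) = |a n| * (1 + u) ^ (2 * k - 2)
        + ∑ j ∈ Finset.Icc 1 (k - 1),
            |a (n - j)| * |x| ^ (-(j : ℤ)) * (1 + u) ^ (2 * (k - j) - 1))
    (hCeven : ∀ k, 1 ≤ k → k ≤ n →
      C (2 * k) = |a n| * (1 + u) ^ (2 * k - 1)
        + ∑ j ∈ Finset.Icc 1 k,
            |a (n - j)| * |x| ^ (-(j : ℤ)) * (1 + u) ^ (2 * (k - j))) :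
    ∑ i ∈ Finset.Icc 1 (2 * n), (|x| ^ n * C i) ^ 2
      ≤ (∑ j ∈ Finset.range (n + 1), |a j * x ^ j|) ^ 2
          * ((1 + u) ^ (4 * n) - 1) / (u ^ 2 + 2 * u) := by
  set S := ∑ j ∈ Finset.range (n + 1), |a j * x ^ j| with hSdef
  have hS0 : 0 ≤ S := Finset.sum_nonneg fun i _ => abs_nonneg _
  have key : ∀ i ∈ Finset.Icc 1 (2 * n),
      (|x| ^ n * C i) ^ 2 ≤ (S * (1 + u) ^ (i - 1)) ^ 2 := by
    intro i hi
    rw [Finset.mem_Icc] at hi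
    rcases Nat.even_or_odd i with ⟨k, hk⟩ | ⟨k, hk⟩
    · -- i = k + k
      have hk1 : 1 ≤ k := by omega
      have hkn : k ≤ n := by omega
      have hCi : C i = |a n| * (1 + u) ^ (2 * k - 1)
          + ∑ j ∈ Finset.Icc 1 k,
              |a (n - j)| * |x| ^ (-(j : ℤ)) * (1 + u) ^ (2 * (k - j)) := by
        rw [show i = 2 * k by omega]
        exact hCeven k hk1 hkn
      have hle : |x| ^ n * C i ≤ S * (1 + u) ^ (i - 1) := by
        rw [hCi, show i - 1 = 2 * k - 1 by omega]
        exact C_bound14 n x hx a u hu k (2 * k - 1) (2 * k - 1) hkn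
          (fun j => 2 * (k - j))
          (fun j hj => by rw [Finset.mem_Icc] at hj; show 2 * (k - j) ≤ 2 * k - 1; omega) le_rfl
      have hnn : 0 ≤ |x| ^ n * C i := by
        rw [hCi]; exact C_nonneg14 n x a u hu k (2 * k - 1) _
      exact pow_le_pow_left₀ hnn hle 2
    · -- i = 2 * k + 1
      have hkn : k + 1 ≤ n := by omega
      have hCi : C i = |a n| * (1 + u) ^ (2 * (k + 1) - 2)
          + ∑ j ∈ Finset.Icc 1 (k + 1 - 1),
              |a (n - j)| * |x| ^ (-(j : ℤ)) * (1 + u) ^ (2 * (k + 1 - j) - 1) := by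
        rw [show i = 2 * (k + 1) - 1 by omega]
        exact hCodd (k + 1) (by omega) hkn
      have hle : |x| ^ n * C i ≤ S * (1 + u) ^ (i - 1) := by
        rw [hCi, show k + 1 - 1 = k by omega, show i - 1 = 2 * k by omega]
        exact C_bound14 n x hx a u hu k (2 * k) (2 * (k + 1) - 2) (by omega)
          (fun j => 2 * (k + 1 - j) - 1)
          (fun j hj => by rw [Finset.mem_Icc] at hj; show 2 * (k + 1 - j) - 1 ≤ 2 * k; omega) (by omega)
      have hnn : 0 ≤ |x| ^ n * C i := by
        rw [hCi]; exact C_nonneg14 n x a u hu (k + 1 - 1) (2 * (k + 1) - 2) _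
      exact pow_le_pow_left₀ hnn hle 2
  have hne : ((1 + u) ^ 2 : ℝ) ≠ 1 := by nlinarith
  calc ∑ i ∈ Finset.Icc 1 (2 * n), (|x| ^ n * C i) ^ 2
      ≤ ∑ i ∈ Finset.Icc 1 (2 * n), (S * (1 + u) ^ (i - 1)) ^ 2 :=
        Finset.sum_le_sum key
    _ = S ^ 2 * ∑ i ∈ Finset.range (2 * n), ((1 + u) ^ 2) ^ i := by
        rw [show Finset.Icc 1 (2 * n) = Finset.Ico 1 (2 * n + 1) by rw [Finset.Ico_add_one_right_eq_Icc],
          Finset.sum_Ico_eq_sum_range, Finset.mul_sum]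
        simp only [Nat.add_sub_cancel, Nat.add_sub_cancel_left]
        refine Finset.sum_congr rfl fun i _ => ?_
        rw [mul_pow, ← pow_mul, mul_comm i 2, pow_mul]
    _ = S ^ 2 * ((1 + u) ^ (4 * n) - 1) / (u ^ 2 + 2 * u) := by
        rw [geom_sum_eq hne, ← pow_mul, show 2 * (2 * n) = 4 * n by ring,
          show ((1 + u) ^ 2 - 1 : ℝ) = u ^ 2 + 2 * u by ring, mul_div_assoc]
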